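/- For all positive semidefinite real q×q matrices A and B: 2·tr(√(√A · B · √A)) ≤ tr(A) + tr(B). Equivalently, the covariance term tr(A + B − 2·(√A B √A)^{1/2}) appearing in the Gelbrich (squared Bures–Wasserstein) distance between two centered distributions with covariances A and B is nonnegative. -/

import Mathlib

open Matrix

section
open scoped ComplexOrder
/-- The positive semidefinite square root of a positive semidefinite matrix
(the definition removed from Mathlib, restated verbatim). -/
noncomputable def Matrix.PosSemidef.sqrt {n 𝕜 : Type*} [Fintype n] [RCLike 𝕜] [DecidableEq n]
    {A : Matrix n n 𝕜} (hA : A.PosSemidef) : Matrix n n 𝕜 :=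
  hA.1.eigenvectorUnitary.1 * diagonal ((↑) ∘ (√·) ∘ hA.1.eigenvalues) *
  (star hA.1.eigenvectorUnitary : Matrix n n 𝕜)

end

lemma Matrix.PosSemidef.posSemidef_sqrt {q : ℕ} {A : Matrix (Fin q) (Fin q) ℝ}
    (hA : A.PosSemidef) : hA.sqrt.PosSemidef := by
  have hD : (diagonal (RCLike.ofReal ∘ (√·) ∘ hA.1.eigenvalues) : Matrix (Fin q) (Fin q) ℝ).PosSemidef := by
    rw [posSemidef_diagonal_iff]
    intro i
    simp [Real.sqrt_nonneg]
  have := hD.conjTranspose_mul_mul_same (star hA.1.eigenvectorUnitary : Matrix (Fin q) (Fin q) ℝ)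
  simpa only [Matrix.PosSemidef.sqrt, ← Matrix.star_eq_conjTranspose, Unitary.coe_star,
    star_star] using this

lemma Matrix.PosSemidef.sqrt_mul_self {q : ℕ} {A : Matrix (Fin q) (Fin q) ℝ}
    (hA : A.PosSemidef) : hA.sqrt * hA.sqrt = A := by
  set U : Matrix (Fin q) (Fin q) ℝ := (hA.1.eigenvectorUnitary : Matrix (Fin q) (Fin q) ℝ)
  have hU : star U * U = 1 := Matrix.mem_unitaryGroup_iff'.mp hA.1.eigenvectorUnitary.2
  have hspec := hA.1.spectral_theorem
  rw [Unitary.conjStarAlgAut_apply] at hspec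
  have e : hA.sqrt * hA.sqrt
      = U * (diagonal (RCLike.ofReal ∘ (√·) ∘ hA.1.eigenvalues) * (star U * U)
        * diagonal (RCLike.ofReal ∘ (√·) ∘ hA.1.eigenvalues)) * star U := by
    simp only [Matrix.PosSemidef.sqrt, U, Matrix.mul_assoc]
  rw [e, hU, Matrix.mul_one, Matrix.diagonal_mul_diagonal]
  conv_rhs => rw [hspec]
  congr 2
  refine congrArg Matrix.diagonal (funext fun i => ?_)
  simp [Real.mul_self_sqrt (hA.eigenvalues_nonneg i)]

private lemma trace_nonneg_of_posSemidef {q : ℕ} {M : Matrix (Fin q) (Fin q) ℝ}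
    (hM : M.PosSemidef) : 0 ≤ M.trace := by
  rw [Matrix.trace]
  refine Finset.sum_nonneg fun i _ => ?_
  have := hM.2 (Finsupp.single i 1)
  simpa using this

/-- Nonnegativity of the Gelbrich/Bures–Wasserstein covariance term: for all
positive semidefinite real `q×q` matrices `A` and `B`,
`2·tr(√(√A·B·√A)) ≤ tr(A) + tr(B)`. -/
theorem two_trace_sqrt_le_trace_add_trace
    {q : ℕ} (A B : Matrix (Fin q) (Fin q) ℝ)
    (hA : A.PosSemidef) (hB : B.PosSemidef)
    (hC : (hA.sqrt * B * hA.sqrt).PosSemidef) :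
    2 * (hC.sqrt).trace ≤ A.trace + B.trace := by
  classical
  set sA : Matrix (Fin q) (Fin q) ℝ := hA.sqrt with hsAdef
  set sB : Matrix (Fin q) (Fin q) ℝ := hB.sqrt with hsBdef
  set S : Matrix (Fin q) (Fin q) ℝ := hC.sqrt with hSdef
  have hS : S.PosSemidef := hC.posSemidef_sqrt
  have hSS : S * S = sA * B * sA := hC.sqrt_mul_self
  -- spectral data of S
  set V : Matrix (Fin q) (Fin q) ℝ := (hS.1.eigenvectorUnitary : Matrix (Fin q) (Fin q) ℝ)
    with hVdef
  set s : Fin q → ℝ := hS.1.eigenvalues with hsdef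
  have hs_nonneg : ∀ i, 0 ≤ s i := fun i => hS.eigenvalues_nonneg i
  have hVVs : V * star V = 1 := Matrix.mem_unitaryGroup_iff.mp hS.1.eigenvectorUnitary.2
  have hVsV : star V * V = 1 := Matrix.mem_unitaryGroup_iff'.mp hS.1.eigenvectorUnitary.2
  have hdiag : star V * S * V = Matrix.diagonal s := by
    have := hS.1.conjStarAlgAut_star_eigenvectorUnitary
    simpa [RCLike.ofReal_real_eq_id] using this
  -- pseudo-inverse of eigenvalues
  set g : Fin q → ℝ := fun i => if s i = 0 then 0 else (s i)⁻¹ with hgdef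
  set Dp : Matrix (Fin q) (Fin q) ℝ := Matrix.diagonal g with hDpdef
  have hDp_star : star Dp = Dp := by
    simp [hDpdef, Matrix.star_eq_conjTranspose, Matrix.diagonal_conjTranspose]
  -- symmetry of sqrts
  have hAs : star sA = sA := hA.posSemidef_sqrt.1
  have hBs : star sB = sB := hB.posSemidef_sqrt.1
  have hSsym : star S = S := hS.1
  have hAA : sA * sA = A := hA.sqrt_mul_self
  have hBB : ∀ X : Matrix (Fin q) (Fin q) ℝ, sB * (sB * X) = B * X := fun X => by
    rw [← Matrix.mul_assoc, hB.sqrt_mul_self]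
  -- diagonalization of S*S
  have hVCV : star V * (S * S) * V = Matrix.diagonal (fun i => s i * s i) := by
    have h2 : (star V * S * V) * (star V * S * V) = star V * (S * S) * V := by
      have e : (star V * S * V) * (star V * S * V)
          = star V * S * (V * star V) * S * V := by
        simp only [Matrix.mul_assoc]
      rw [e, hVVs, Matrix.mul_one]
      simp only [Matrix.mul_assoc]
    rw [← h2, hdiag, Matrix.diagonal_mul_diagonal]
  have k1 : star V * (sA * (B * (sA * V))) = Matrix.diagonal (fun i => s i * s i) := by
    have := hVCV
    rw [hSS] at this
    simpa only [Matrix.mul_assoc] using this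
  -- trace of S
  have htrS : S.trace = ∑ i, s i := by
    have h1 : (star V * S * V).trace = S.trace := by
      rw [Matrix.trace_mul_cycle, hVVs, Matrix.one_mul]
    rw [← h1, hdiag, Matrix.trace_diagonal]
  -- the partial isometry relating √B√A to S
  set U : Matrix (Fin q) (Fin q) ℝ := sB * (sA * (V * Dp)) with hUdef
  have hUstar : star U = Dp * (star V * (sA * sB)) := by
    rw [hUdef]
    simp only [Matrix.star_mul, hAs, hBs, hDp_star, Matrix.mul_assoc]
  -- sum identity
  have hsum : ∑ i, (s i * s i * g i) = ∑ i, s i := by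
    refine Finset.sum_congr rfl fun i _ => ?_
    by_cases h : s i = 0
    · simp [hgdef, h]
    · simp only [hgdef]
      rw [if_neg h]
      field_simp
  -- the four trace computations
  have hT1 : ((star V * sA) * (sA * V)).trace = A.trace := by
    have e : (star V * sA) * (sA * V) = star V * (A * V) := by
      rw [← hAA]; simp only [Matrix.mul_assoc]
    rw [e, ← Matrix.mul_assoc, Matrix.trace_mul_cycle, hVVs, Matrix.one_mul]
  have hT2 : ((star V * sA) * (sB * U)).trace = ∑ i, s i := by
    have e : (star V * sA) * (sB * U)
        = (star V * (sA * (B * (sA * V)))) * Dp := by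
      rw [hUdef, hBB]
      simp only [Matrix.mul_assoc]
    rw [e, k1, Matrix.diagonal_mul_diagonal, Matrix.trace_diagonal]
    exact hsum
  have hT3 : ((star U * sB) * (sA * V)).trace = ∑ i, s i := by
    have e : (star U * sB) * (sA * V)
        = Dp * (star V * (sA * (B * (sA * V)))) := by
      rw [hUstar]
      simp only [Matrix.mul_assoc]
      rw [hBB]
    rw [e, k1, Matrix.diagonal_mul_diagonal, Matrix.trace_diagonal]
    rw [← hsum]
    exact Finset.sum_congr rfl fun i _ => by ring
  have hT4 : ((star U * sB) * (sB * U)).trace = (B * (U * star U)).trace := by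
    have e : (star U * sB) * (sB * U) = star U * (B * U) := by
      rw [← hBB U]; simp only [Matrix.mul_assoc]
    rw [e, Matrix.trace_mul_comm, Matrix.mul_assoc]
  -- the projection P = U Uᵀ and trace(B P) ≤ trace B
  set ee : Fin q → ℝ := fun i => if s i = 0 then 0 else 1 with hedef
  have hUsU : star U * U = Matrix.diagonal ee := by
    have e1 : star U * U = Dp * ((star V * (sA * (B * (sA * V)))) * Dp) := by
      rw [hUstar, hUdef]
      simp only [Matrix.mul_assoc]
      rw [hBB]
    rw [e1, k1, Matrix.diagonal_mul_diagonal, Matrix.diagonal_mul_diagonal]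
    refine congrArg Matrix.diagonal (funext fun i => ?_)
    by_cases h : s i = 0
    · simp [hgdef, hedef, h]
    · simp only [hgdef, hedef]
      rw [if_neg h, if_neg h]
      field_simp
  have hUe : U * Matrix.diagonal ee = U := by
    have hDe : Dp * Matrix.diagonal ee = Dp := by
      rw [hDpdef, Matrix.diagonal_mul_diagonal]
      refine congrArg Matrix.diagonal (funext fun i => ?_)
      by_cases h : s i = 0
      · simp [hgdef, hedef, h]
      · simp only [hgdef, hedef]
        rw [if_neg h, if_neg h, mul_one]
    rw [hUdef]
    simp only [Matrix.mul_assoc]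
    rw [hDe]
  obtain ⟨P, hPdef⟩ : ∃ P : Matrix (Fin q) (Fin q) ℝ, P = U * star U := ⟨_, rfl⟩
  have hPstar : star P = P := by
    rw [hPdef, Matrix.star_mul, star_star]
  have hPP : P * P = P := by
    have e1 : P * P = U * ((star U * U) * star U) := by
      rw [hPdef]; simp only [Matrix.mul_assoc]
    rw [e1, hUsU, ← Matrix.mul_assoc, hUe, ← hPdef]
  obtain ⟨Q, hQdef⟩ : ∃ Q : Matrix (Fin q) (Fin q) ℝ, Q = 1 - P := ⟨_, rfl⟩
  have hQstar : star Q = Q := by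
    rw [hQdef, star_sub, star_one, hPstar]
  have hQQ : Q * Q = Q := by
    rw [hQdef, Matrix.sub_mul, Matrix.mul_sub, Matrix.mul_sub, hPP]
    simp only [one_mul, mul_one]
    abel
  have hBP : (B * P).trace ≤ B.trace := by
    have hps : (Qᴴ * B * Q).PosSemidef := hB.conjTranspose_mul_mul_same Q
    have h0 : 0 ≤ (Qᴴ * B * Q).trace := trace_nonneg_of_posSemidef hps
    have e1 : (Qᴴ * B * Q).trace = (B * Q).trace := by
      rw [Matrix.trace_mul_cycle, ← Matrix.star_eq_conjTranspose, hQstar,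
        hQQ, Matrix.trace_mul_comm]
    rw [e1, hQdef, Matrix.mul_sub, Matrix.mul_one, Matrix.trace_sub] at h0
    linarith
  -- main inequality: 0 ≤ tr(Mᴴ M) with M = √A V − √B U
  set M : Matrix (Fin q) (Fin q) ℝ := sA * V - sB * U with hMdef
  have hMps : (Mᴴ * M).PosSemidef := Matrix.posSemidef_conjTranspose_mul_self M
  have h0 : 0 ≤ (Mᴴ * M).trace := trace_nonneg_of_posSemidef hMps
  have hexp : (Mᴴ * M).trace
      = ((star V * sA) * (sA * V)).trace - ((star V * sA) * (sB * U)).trace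
        - (((star U * sB) * (sA * V)).trace - ((star U * sB) * (sB * U)).trace) := by
    have e1 : Mᴴ * M = (star V * sA - star U * sB) * (sA * V - sB * U) := by
      rw [← Matrix.star_eq_conjTranspose, hMdef, star_sub, Matrix.star_mul, Matrix.star_mul, hAs, hBs]
    rw [e1, Matrix.sub_mul, Matrix.mul_sub, Matrix.mul_sub, Matrix.trace_sub,
      Matrix.trace_sub, Matrix.trace_sub]
  rw [hexp, hT1, hT2, hT3, hT4, ← hPdef] at h0
  rw [htrS]
  linarith
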